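/- Let K(s,t) := e^{−|s−t|} for s, t ∈ ℝ (the exponential kernel). For every injective sequence (x_j)_{j∈ℕ} in ℝ and every complex sequence (c_j) with ∑_j |c_j| < ∞, if ∑_{j=1}^∞ c_j e^{−|x_j − t|} = 0 for all t ∈ ℝ, then c_j = 0 for all j; that is, K satisfies condition (A3). -/

import Mathlib

open Real Filter Topology

lemma key_id (d h : ℝ) (hh : 0 < h) :
    Real.exp (-|d - h|) + Real.exp (-|d + h|) - (Real.exp h + Real.exp (-h)) * Real.exp (-|d|)
      = -2 * Real.sinh (max (h - |d|) 0) := by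
  have main : ∀ e : ℝ, 0 ≤ e →
      Real.exp (-|e - h|) + Real.exp (-|e + h|) - (Real.exp h + Real.exp (-h)) * Real.exp (-|e|)
        = -2 * Real.sinh (max (h - |e|) 0) := by
    intro e he
    rw [abs_of_nonneg he, abs_of_nonneg (by linarith : (0:ℝ) ≤ e + h)]
    rcases le_or_gt h e with hle | hlt
    · rw [abs_of_nonneg (by linarith : (0:ℝ) ≤ e - h),
        max_eq_right (by linarith : h - e ≤ 0), Real.sinh_zero]
      rw [show -(e-h) = -e + h by ring, show -(e+h) = -e + -h by ring,
        Real.exp_add, Real.exp_add]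
      ring
    · rw [abs_of_nonpos (by linarith : e - h ≤ 0),
        max_eq_left (by linarith : (0:ℝ) ≤ h - e), Real.sinh_eq]
      rw [show -(-(e-h)) = e + -h by ring, show -(e+h) = -e + -h by ring,
        show h - e = h + -e by ring]
      simp only [neg_add, neg_neg, Real.exp_add]
      ring
  rcases le_or_gt 0 d with hd | hd
  · exact main d hd
  · have := main (-d) (by linarith)
    rw [show -d - h = -(d+h) by ring, show -d + h = -(d-h) by ring, abs_neg, abs_neg, abs_neg] at this
    linarith [this]

theorem stmt_18 (x : ℕ → ℝ) (hinj : Function.Injective x) (c : ℕ → ℂ)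
    (hc : Summable fun j => ‖c j‖)
    (hzero : ∀ t : ℝ, ∑' j, c j * ((Real.exp (-|x j - t|) : ℝ) : ℂ) = 0) :
    ∀ j, c j = 0 := by
  -- summability of each series
  have hs : ∀ t : ℝ, Summable fun j => c j * ((Real.exp (-|x j - t|) : ℝ) : ℂ) := by
    intro t
    apply Summable.of_norm_bounded hc
    intro j
    rw [norm_mul, Complex.norm_real, Real.norm_eq_abs, abs_of_pos (Real.exp_pos _)]
    have : Real.exp (-|x j - t|) ≤ 1 := Real.exp_le_one_iff.mpr (neg_nonpos.mpr (abs_nonneg _))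
    calc ‖c j‖ * Real.exp (-|x j - t|) ≤ ‖c j‖ * 1 := by
          exact mul_le_mul_of_nonneg_left this (norm_nonneg _)
      _ = ‖c j‖ := by rw [mul_one]
  intro j₀
  set d : ℕ → ℝ := fun j => |x j - x j₀| with hd
  -- key summed identity
  have key : ∀ h : ℝ, 0 < h →
      ∑' j, c j * ((Real.sinh (max (h - d j) 0) : ℝ) : ℂ) = 0 := by
    intro h hh
    have hsinh : Summable fun j => c j * ((Real.sinh (max (h - d j) 0) : ℝ) : ℂ) := by
      apply Summable.of_norm_bounded (hc.mul_left (Real.sinh h))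
      intro j
      rw [norm_mul, Complex.norm_real, Real.norm_eq_abs,
        abs_of_nonneg (Real.sinh_nonneg_iff.mpr (le_max_right _ _))]
      have h1 : Real.sinh (max (h - d j) 0) ≤ Real.sinh h := by
        apply Real.sinh_le_sinh.mpr
        exact max_le (by have := abs_nonneg (x j - x j₀); simp only [hd] at *; linarith) hh.le
      calc ‖c j‖ * Real.sinh (max (h - d j) 0) ≤ ‖c j‖ * Real.sinh h :=
            mul_le_mul_of_nonneg_left h1 (norm_nonneg _)
        _ = Real.sinh h * ‖c j‖ := by rw [mul_comm]
    have S1 := hs (x j₀ + h); have S2 := hs (x j₀ - h); have S3 := hs (x j₀)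
    have comb : ∑' j, c j * (((-2 * Real.sinh (max (h - d j) 0)) : ℝ) : ℂ) = 0 := by
      have step : ∀ j, c j * (((-2 * Real.sinh (max (h - d j) 0)) : ℝ) : ℂ)
          = c j * ((Real.exp (-|x j - (x j₀ + h)|) : ℝ) : ℂ)
            + c j * ((Real.exp (-|x j - (x j₀ - h)|) : ℝ) : ℂ)
            - ((Real.exp h + Real.exp (-h) : ℝ) : ℂ) *
              (c j * ((Real.exp (-|x j - x j₀|) : ℝ) : ℂ)) := by
        intro j
        have := key_id (x j - x j₀) h hh
        rw [show x j - (x j₀ + h) = (x j - x j₀) - h by ring,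
          show x j - (x j₀ - h) = (x j - x j₀) + h by ring]
        rw [show (d j : ℝ) = |x j - x j₀| from rfl]
        push_cast [← this]
        ring
      rw [tsum_congr step, Summable.tsum_sub (S1.add S2) (S3.mul_left _), Summable.tsum_add S1 S2,
        tsum_mul_left, hzero, hzero, hzero]
      ring
    have comb2 : (-2 : ℂ) * ∑' j, c j * ((Real.sinh (max (h - d j) 0) : ℝ) : ℂ) = 0 := by
      rw [← tsum_mul_left, ← comb]
      apply tsum_congr
      intro j; push_cast; ring
    have h2 : (-2 : ℂ) ≠ 0 := by norm_num
    exact (mul_eq_zero.mp comb2).resolve_left h2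
  -- dominated convergence as h → 0⁺
  set F : ℝ → ℕ → ℂ := fun h j => c j * ((Real.sinh (max (h - d j) 0) / Real.sinh h : ℝ) : ℂ)
    with hF
  set g : ℕ → ℂ := fun j => if j = j₀ then c j₀ else 0 with hg
  have htend : Tendsto (fun h => ∑' j, F h j) (𝓝[>] (0:ℝ)) (𝓝 (∑' j, g j)) := by
    apply tendsto_tsum_of_dominated_convergence hc
    · intro j
      by_cases hj : j = j₀
      · subst hj
        have hev : ∀ᶠ h in 𝓝[>] (0:ℝ), c j = F h j := by
          filter_upwards [self_mem_nhdsWithin] with h hh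
          have hh' : (0:ℝ) < h := hh
          have hdj : d j = 0 := by simp [hd]
          have hne : Real.sinh h ≠ 0 := ne_of_gt (by rwa [Real.sinh_pos_iff])
          simp only [hF, hdj, sub_zero, max_eq_left hh'.le, div_self hne,
            Complex.ofReal_one, mul_one]
        rw [show g j = c j from by simp [hg]]
        exact Tendsto.congr' hev tendsto_const_nhds
      · have hdj : 0 < d j := by
          simp only [hd]
          exact abs_pos.mpr (sub_ne_zero.mpr (fun e => hj (hinj e)))
        have hev : ∀ᶠ h in 𝓝[>] (0:ℝ), (0:ℂ) = F h j := by
          filter_upwards [(gt_mem_nhds hdj).filter_mono nhdsWithin_le_nhds] with h hh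
          have hm : max (h - d j) 0 = 0 := max_eq_right (by linarith)
          simp [hF, hm]
        rw [show g j = 0 from by simp [hg, hj]]
        exact Tendsto.congr' hev tendsto_const_nhds
    · filter_upwards [self_mem_nhdsWithin] with h hh
      intro j
      have hh' : (0:ℝ) < h := hh
      have hp : 0 < Real.sinh h := Real.sinh_pos_iff.mpr hh'
      have h0 : 0 ≤ Real.sinh (max (h - d j) 0) := Real.sinh_nonneg_iff.mpr (le_max_right _ _)
      have h1 : Real.sinh (max (h - d j) 0) ≤ Real.sinh h :=
        Real.sinh_le_sinh.mpr (max_le (by have : 0 ≤ d j := abs_nonneg _; linarith) hh'.le)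
      rw [hF, norm_mul, Complex.norm_real, Real.norm_eq_abs,
        abs_of_nonneg (div_nonneg h0 hp.le)]
      calc ‖c j‖ * (Real.sinh (max (h - d j) 0) / Real.sinh h) ≤ ‖c j‖ * 1 := by
            apply mul_le_mul_of_nonneg_left _ (norm_nonneg _)
            exact (div_le_one hp).mpr h1
        _ = ‖c j‖ := by rw [mul_one]
  have hzero' : ∀ᶠ h in 𝓝[>] (0:ℝ), (∑' j, F h j) = 0 := by
    filter_upwards [self_mem_nhdsWithin] with h hh
    have hh' : (0:ℝ) < h := hh
    have hp : Real.sinh h ≠ 0 := ne_of_gt (Real.sinh_pos_iff.mpr hh')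
    have : ∑' j, F h j = ((Real.sinh h : ℝ) : ℂ)⁻¹ *
        ∑' j, c j * ((Real.sinh (max (h - d j) 0) : ℝ) : ℂ) := by
      rw [← tsum_mul_left]
      apply tsum_congr
      intro j
      rw [hF]
      push_cast [div_eq_inv_mul]
      ring
    rw [this, key h hh']
    ring
  have hzero'' : ∀ᶠ h in 𝓝[>] (0:ℝ), (0:ℂ) = ∑' j, F h j := by
    filter_upwards [hzero'] with h hh; exact hh.symm
  have htend0 : Tendsto (fun h => ∑' j, F h j) (𝓝[>] (0:ℝ)) (𝓝 0) :=
    Tendsto.congr' hzero'' tendsto_const_nhds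
  have : (∑' j, g j) = 0 := tendsto_nhds_unique htend htend0
  rw [hg] at this
  rwa [tsum_ite_eq j₀ (fun _ => c j₀)] at this
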